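/- Linear case: the AA(m) iteration map Ψ is Lipschitz at any z with first block z_{m+1} = x* = A⁻¹b: for all perturbations d ∈ ℝ^{n(m+1)}, ‖Ψ(z + d) - Ψ(z)‖ ≤ L‖d‖ with L = (1 + ‖A⁻¹‖·‖A‖)·‖I - A‖ + 1. -/

import Mathlib

open scoped Topology
open Filter Matrix

noncomputable section

/-- The four Penrose conditions: `P` is the Moore–Penrose pseudo-inverse of `B`. -/
def IsMoorePenrose {k l : ℕ} (B : Matrix (Fin k) (Fin l) ℝ)
    (P : Matrix (Fin l) (Fin k) ℝ) : Prop :=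
  B * P * B = B ∧ P * B * P = P ∧ (B * P)ᵀ = B * P ∧ (P * B)ᵀ = P * B

open Classical in
/-- The Moore–Penrose pseudo-inverse `B†` (the unique matrix satisfying the Penrose
conditions; it always exists for real matrices). -/
def pinv {k l : ℕ} (B : Matrix (Fin k) (Fin l) ℝ) : Matrix (Fin l) (Fin k) ℝ :=
  if h : ∃ P, IsMoorePenrose B P then h.choose else 0

/-- Spectral (operator) norm of a matrix, as the operator norm of the induced map on
Euclidean spaces. -/
def specNorm {k l : ℕ} (B : Matrix (Fin k) (Fin l) ℝ) : ℝ :=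
  ‖LinearMap.toContinuousLinearMap (Matrix.toEuclideanLin B)‖

/-- Difference matrix `D(z) = [z_{m+1}-z_m, …, z_{m+1}-z₁]`; blocks are indexed so that
`z j` is the paper's `z_{j+1}`, i.e. `z (Fin.last m)` is `z_{m+1}`, and column `j`
(`j = 0, …, m-1`) is `z_{m+1} - z_{m-j}`. -/
def Dmat {n m : ℕ} (z : Fin (m + 1) → Fin n → ℝ) : Matrix (Fin n) (Fin m) ℝ :=
  Matrix.of fun i j => (z (Fin.last m) - z (Fin.rev j.succ)) i

/-- Residual difference matrix `R(z) = [r(z_{m+1})-r(z_m), …, r(z_{m+1})-r(z₁)]`. -/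
def Rmat {n m : ℕ} (r : (Fin n → ℝ) → Fin n → ℝ) (z : Fin (m + 1) → Fin n → ℝ) :
    Matrix (Fin n) (Fin m) ℝ :=
  Matrix.of fun i j => (r (z (Fin.last m)) - r (z (Fin.rev j.succ))) i

/-- Iterate difference matrix `Q(z) = [q(z_{m+1})-q(z_m), …, q(z_{m+1})-q(z₁)]`. -/
def Qmat {n m : ℕ} (q : (Fin n → ℝ) → Fin n → ℝ) (z : Fin (m + 1) → Fin n → ℝ) :
    Matrix (Fin n) (Fin m) ℝ :=
  Matrix.of fun i j => (q (z (Fin.last m)) - q (z (Fin.rev j.succ))) i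

/-- AA(m) coefficient vector `β(z) = -R(z)† r(z_{m+1})`. -/
def betaF {n m : ℕ} (r : (Fin n → ℝ) → Fin n → ℝ) (z : Fin (m + 1) → Fin n → ℝ) :
    Fin m → ℝ :=
  -(pinv (Rmat r z)).mulVec (r (z (Fin.last m)))

/-- AA(m) iteration map `Ψ(z) = (q(z_{m+1}) + Q(z)β(z), z_{m+1}, z_m, …, z₂)`. -/
def PsiM {n m : ℕ} (q : (Fin n → ℝ) → Fin n → ℝ) (z : Fin (m + 1) → Fin n → ℝ) :
    Fin (m + 1) → Fin n → ℝ :=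
  fun i => Fin.lastCases
    (q (z (Fin.last m)) + (Qmat q z).mulVec (betaF (fun x => x - q x) z))
    (fun j : Fin m => z j.succ) i

/-- Euclidean norm on `ℝ^{n(m+1)}` viewed as block vectors. -/
def enormV {n m : ℕ} (v : Fin (m + 1) → Fin n → ℝ) : ℝ :=
  Real.sqrt (∑ i, ∑ j, v i j ^ 2)

/- ### Auxiliary lemmas -/


def eN {n : ℕ} (v : Fin n → ℝ) : ℝ := Real.sqrt (∑ j, v j ^ 2)

lemma eN_eq_norm {n : ℕ} (v : Fin n → ℝ) :
    eN v = ‖(WithLp.equiv 2 (Fin n → ℝ)).symm v‖ := by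
  rw [EuclideanSpace.norm_eq]; simp [eN, Real.norm_eq_abs, sq_abs]

lemma eN_nonneg {n : ℕ} (v : Fin n → ℝ) : 0 ≤ eN v := Real.sqrt_nonneg _

lemma sq_eN {n : ℕ} (v : Fin n → ℝ) : eN v ^ 2 = ∑ j, v j ^ 2 := by
  rw [eN, Real.sq_sqrt (Finset.sum_nonneg fun _ _ => sq_nonneg _)]

lemma eN_sub_le {n : ℕ} (v w : Fin n → ℝ) : eN (v - w) ≤ eN v + eN w := by
  simp only [eN_eq_norm]
  have : (WithLp.equiv 2 (Fin n → ℝ)).symm (v - w)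
      = (WithLp.equiv 2 (Fin n → ℝ)).symm v - (WithLp.equiv 2 (Fin n → ℝ)).symm w := rfl
  rw [this]; exact norm_sub_le _ _

lemma specNorm_nonneg {k l : ℕ} (B : Matrix (Fin k) (Fin l) ℝ) : 0 ≤ specNorm B :=
  norm_nonneg _

lemma eN_mulVec_le {k l : ℕ} (B : Matrix (Fin k) (Fin l) ℝ) (x : Fin l → ℝ) :
    eN (B.mulVec x) ≤ specNorm B * eN x := by
  rw [eN_eq_norm, eN_eq_norm]
  have := (LinearMap.toContinuousLinearMap (Matrix.toEuclideanLin B)).le_opNorm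
    ((WithLp.equiv 2 (Fin l → ℝ)).symm x)
  simpa [specNorm, Matrix.toEuclideanLin_toLp] using this

lemma dot_le {n : ℕ} (v w : Fin n → ℝ) : v ⬝ᵥ w ≤ eN v * eN w := by
  have h := real_inner_le_norm ((WithLp.equiv 2 (Fin n → ℝ)).symm v)
    ((WithLp.equiv 2 (Fin n → ℝ)).symm w)
  rw [eN_eq_norm, eN_eq_norm]
  refine le_trans (le_of_eq ?_) h
  simp [PiLp.inner_apply, dotProduct, RCLike.inner_apply, mul_comm]

lemma eN_proj_le {n : ℕ} (M : Matrix (Fin n) (Fin n) ℝ) (hMM : M * M = M)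
    (hMT : Mᵀ = M) (x : Fin n → ℝ) : eN (M.mulVec x) ≤ eN x := by
  have key : eN (M.mulVec x) ^ 2 ≤ eN (M.mulVec x) * eN x := by
    have h1 : (M.mulVec x) ⬝ᵥ (M.mulVec x) = (M.mulVec x) ⬝ᵥ x := by
      rw [Matrix.dotProduct_mulVec, Matrix.vecMul_mulVec]
      rw [hMT, hMM, ← Matrix.dotProduct_mulVec, dotProduct_comm]
    have h2 : eN (M.mulVec x) ^ 2 = (M.mulVec x) ⬝ᵥ (M.mulVec x) := by
      rw [sq_eN]; simp [dotProduct, sq]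
    rw [h2, h1]; exact dot_le _ _
  rcases eq_or_lt_of_le (eN_nonneg (M.mulVec x)) with h | h
  · rw [← h]; exact eN_nonneg x
  · nlinarith [key]


lemma mul_col {k l p : ℕ} (B : Matrix (Fin k) (Fin l) ℝ) (C : Matrix (Fin l) (Fin p) ℝ)
    (i : Fin k) (j : Fin p) : (B * C) i j = (B.mulVec (fun t => C t j)) i := by
  simp [Matrix.mul_apply, Matrix.mulVec, dotProduct]


set_option maxHeartbeats 1000000 in
/-- linear case. The AA(m) map `Ψ` is Lipschitz at any `z` whose first block
is `z_{m+1} = x* = A⁻¹b`, with constant `L = (1 + ‖A⁻¹‖‖A‖)‖I-A‖ + 1` (spectral norms). -/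
theorem stmt14 {n m : ℕ} (A : Matrix (Fin n) (Fin n) ℝ) (hA : IsUnit A.det)
    (b : Fin n → ℝ) (q : (Fin n → ℝ) → Fin n → ℝ)
    (hq : q = fun x => (1 - A).mulVec x + b)
    (z : Fin (m + 1) → Fin n → ℝ) (hz : z (Fin.last m) = A⁻¹.mulVec b) :
    ∀ d : Fin (m + 1) → Fin n → ℝ,
      enormV (PsiM q (z + d) - PsiM q z) ≤
        ((1 + specNorm A⁻¹ * specNorm A) * specNorm (1 - A) + 1) * enormV d := by
  intro d
  set l := Fin.last m with hl
  set r : (Fin n → ℝ) → Fin n → ℝ := fun x => x - q x with hrdef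
  have hr : ∀ x, r x = A.mulVec x - b := by
    intro x
    simp only [hrdef, hq, Matrix.sub_mulVec, Matrix.one_mulVec]
    abel
  have hAzl : A.mulVec (z l) = b := by
    rw [hz, Matrix.mulVec_mulVec, Matrix.mul_nonsing_inv _ hA, Matrix.one_mulVec]
  have hrzl : r (z l) = 0 := by rw [hr, hAzl, sub_self]
  have hbz : betaF r z = 0 := by
    simp [betaF, show r (z (Fin.last m)) = 0 from hrzl, Matrix.mulVec_zero]
  have hrzd : r ((z + d) l) = A.mulVec (d l) := by
    rw [hr]
    simp only [Pi.add_apply, Matrix.mulVec_add, hAzl]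
    abel
  set D : Matrix (Fin n) (Fin m) ℝ := Dmat (z + d) with hD
  have hDcol : ∀ j : Fin m, (fun t => D t j) = (z + d) l - (z + d) (Fin.rev j.succ) := by
    intro j; rfl
  have hqkey : ∀ a a' : Fin n → ℝ, q a - q a' = (1 - A).mulVec (a - a') := by
    intro a a'
    simp only [hq, Matrix.mulVec_sub]
    abel
  have hrkey : ∀ a a' : Fin n → ℝ, r a - r a' = A.mulVec (a - a') := by
    intro a a'
    simp only [hr, Matrix.mulVec_sub]
    abel
  have hRD : Rmat r (z + d) = A * D := by
    ext i j
    rw [mul_col, hDcol]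
    show (r ((z + d) l) - r ((z + d) (Fin.rev j.succ))) i = _
    rw [hrkey]
  have hQD : Qmat q (z + d) = (1 - A) * D := by
    ext i j
    rw [mul_col, hDcol]
    show (q ((z + d) l) - q ((z + d) (Fin.rev j.succ))) i = _
    rw [hqkey]
  set s1 : ℝ := specNorm (1 - A) with hs1
  set s2 : ℝ := specNorm A⁻¹ with hs2
  set s3 : ℝ := specNorm A with hs3
  have hn1 : 0 ≤ s1 := specNorm_nonneg _
  have hn2 : 0 ≤ s2 := specNorm_nonneg _
  have hn3 : 0 ≤ s3 := specNorm_nonneg _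
  set c : ℝ := (1 + s2 * s3) * s1 with hc
  have hcnn : 0 ≤ c := mul_nonneg (by nlinarith) hn1
  set v : Fin n → ℝ := (PsiM q (z + d) - PsiM q z) l with hv
  have hvval : v = (1 - A).mulVec (d l)
      + ((1 - A) * D).mulVec (-(pinv (A * D)).mulVec (A.mulVec (d l))) := by
    have e1 : PsiM q (z + d) l = q ((z + d) l)
        + (Qmat q (z + d)).mulVec (betaF r (z + d)) := by
      simp [PsiM, hl, ← hrdef]
    have e2 : PsiM q z l = q (z l) := by
      simp [PsiM, hl, ← hrdef, hbz, Matrix.mulVec_zero]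
    have e3 : q ((z + d) l) - q (z l) = (1 - A).mulVec (d l) := by
      have : (z + d) l - z l = d l := by simp
      rw [hqkey, this]
    have e4 : betaF r (z + d) = -(pinv (A * D)).mulVec (A.mulVec (d l)) := by
      simp only [betaF, hRD, show r ((z + d) (Fin.last m)) = A.mulVec (d l) from hrzd]
    have : v = PsiM q (z + d) l - PsiM q z l := rfl
    rw [this, e1, e2, hQD, e4, ← e3]
    abel
  have hvbound : eN v ≤ c * eN (d l) := by
    by_cases hP : ∃ P, IsMoorePenrose (A * D) P
    · obtain ⟨hp1, hp2, hp3, hp4⟩ := hP.choose_spec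
      have hpinv : pinv (A * D) = hP.choose := dif_pos hP
      set P := hP.choose with hPdef
      set M : Matrix (Fin n) (Fin n) ℝ := A * D * P with hM
      have hMM : M * M = M := by
        nth_rewrite 2 [hM]
        rw [← Matrix.mul_assoc, hp1, ← hM]
      have hMT : Mᵀ = M := hp3
      have hDP : D * P = A⁻¹ * M := by
        rw [hM, show A * D * P = A * (D * P) from by rw [Matrix.mul_assoc],
          ← Matrix.mul_assoc, Matrix.nonsing_inv_mul _ hA, Matrix.one_mul]
      set u : Fin n → ℝ := A.mulVec (d l) with hu
      set X : Fin n → ℝ := A⁻¹.mulVec (M.mulVec u) with hX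
      have hvv : v = (1 - A).mulVec (d l - X) := by
        rw [hvval, hpinv, Matrix.mulVec_neg, ← sub_eq_add_neg,
          Matrix.mulVec_sub]
        congr 1
        rw [hX, hu]
        simp only [Matrix.mulVec_mulVec]
        congr 1
        simp only [← Matrix.mul_assoc]
        rw [Matrix.mul_assoc (1 - A) D P, hDP, ← Matrix.mul_assoc]
      rw [hvv]
      calc eN ((1 - A).mulVec (d l - X)) ≤ s1 * eN (d l - X) := eN_mulVec_le _ _
        _ ≤ s1 * (eN (d l) + eN X) :=
            mul_le_mul_of_nonneg_left (eN_sub_le _ _) hn1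
        _ ≤ s1 * (eN (d l) + s2 * eN (M.mulVec u)) :=
            mul_le_mul_of_nonneg_left (by
              have := eN_mulVec_le A⁻¹ (M.mulVec u)
              rw [hX]; linarith) hn1
        _ ≤ s1 * (eN (d l) + s2 * eN u) :=
            mul_le_mul_of_nonneg_left (by
              have := eN_proj_le M hMM hMT u
              nlinarith) hn1
        _ ≤ s1 * (eN (d l) + s2 * (s3 * eN (d l))) :=
            mul_le_mul_of_nonneg_left (by
              have := eN_mulVec_le A (d l)
              rw [hu]; nlinarith) hn1
        _ = c * eN (d l) := by rw [hc]; ring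
    · have hpinv : pinv (A * D) = 0 := dif_neg hP
      have hvv : v = (1 - A).mulVec (d l) := by
        rw [hvval, hpinv]
        simp [Matrix.zero_mulVec, Matrix.mulVec_zero]
      rw [hvv]
      calc eN ((1 - A).mulVec (d l)) ≤ s1 * eN (d l) := eN_mulVec_le _ _
        _ ≤ c * eN (d l) := by
            have hsc : s1 ≤ c := by rw [hc]; nlinarith [mul_nonneg (mul_nonneg hn2 hn3) hn1]
            exact mul_le_mul_of_nonneg_right hsc (eN_nonneg _)
  -- assemble
  have hwcast : ∀ j : Fin m, (PsiM q (z + d) - PsiM q z) j.castSucc = d j.succ := by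
    intro j
    have e1 : PsiM q (z + d) j.castSucc = (z + d) j.succ := by simp [PsiM]
    have e2 : PsiM q z j.castSucc = z j.succ := by simp [PsiM]
    show PsiM q (z + d) j.castSucc - PsiM q z j.castSucc = d j.succ
    rw [e1, e2]; simp
  set S : ℝ := ∑ i, ∑ j, d i j ^ 2 with hS
  have hSnn : 0 ≤ S := Finset.sum_nonneg fun _ _ =>
    Finset.sum_nonneg fun _ _ => sq_nonneg _
  have hdl : eN (d l) ^ 2 ≤ S := by
    rw [sq_eN]
    exact Finset.single_le_sum (f := fun i => ∑ j, d i j ^ 2)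
      (fun i _ => Finset.sum_nonneg fun _ _ => sq_nonneg _) (Finset.mem_univ l)
  have hsum : ∑ i, ∑ j, (PsiM q (z + d) - PsiM q z) i j ^ 2 ≤ (c + 1) ^ 2 * S := by
    rw [Fin.sum_univ_castSucc]
    have t1 : ∑ i : Fin m, ∑ j, (PsiM q (z + d) - PsiM q z) i.castSucc j ^ 2 ≤ S := by
      have e : ∑ i : Fin m, ∑ j, (PsiM q (z + d) - PsiM q z) i.castSucc j ^ 2
          = ∑ i : Fin m, ∑ j, d i.succ j ^ 2 := by
        refine Finset.sum_congr rfl fun i _ => ?_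
        rw [hwcast i]
      rw [e, hS, Fin.sum_univ_succ]
      have := Finset.sum_nonneg (s := Finset.univ)
        (f := fun j => d 0 j ^ 2) fun _ _ => sq_nonneg _
      linarith
    have t2 : ∑ j, (PsiM q (z + d) - PsiM q z) (Fin.last m) j ^ 2 ≤ c ^ 2 * S := by
      have e : ∑ j, (PsiM q (z + d) - PsiM q z) (Fin.last m) j ^ 2 = eN v ^ 2 := by
        rw [sq_eN, hv, hl]
      rw [e]
      have h5 : eN v ^ 2 ≤ (c * eN (d l)) ^ 2 :=
        pow_le_pow_left₀ (eN_nonneg v) hvbound 2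
      have h6 : (c * eN (d l)) ^ 2 = c ^ 2 * eN (d l) ^ 2 := by ring
      have h7 : c ^ 2 * eN (d l) ^ 2 ≤ c ^ 2 * S :=
        mul_le_mul_of_nonneg_left hdl (sq_nonneg c)
      linarith
    nlinarith
  calc enormV (PsiM q (z + d) - PsiM q z)
      = Real.sqrt (∑ i, ∑ j, (PsiM q (z + d) - PsiM q z) i j ^ 2) := rfl
    _ ≤ Real.sqrt ((c + 1) ^ 2 * S) := Real.sqrt_le_sqrt hsum
    _ = (c + 1) * Real.sqrt S := by
        rw [Real.sqrt_mul (sq_nonneg _), Real.sqrt_sq (by linarith)]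
    _ = (c + 1) * enormV d := rfl
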